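/- Assume the principle of Near Coherence of Filters (NCF): for any two nonprincipal ultrafilters U, V on ℕ there exists a finite-to-one map f : ℕ → ℕ (every fiber f⁻¹({n}) is finite) such that the pushforward ultrafilters f(U) and f(V) are equal. Then ω* can be covered by nowhere dense P-sets: ω* is the union of a family of subsets each of which is a nowhere dense P-set of ω*. -/

import Mathlib

open Set

/-- A subset `B` of a topological space is a P-set if the intersection of countably many
neighborhoods of `B` is again a neighborhood of `B`. -/
def IsPSet {X : Type*} [TopologicalSpace X] (B : Set X) : Prop :=
  ∀ U : ℕ → Set X, (∀ n, IsOpen (U n) ∧ B ⊆ U n) →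
    ∃ V : Set X, IsOpen V ∧ B ⊆ V ∧ V ⊆ ⋂ n, U n

/-- An ultrafilter is nonprincipal if it contains no finite set. -/
def Nonprincipal (U : Ultrafilter ℕ) : Prop := ∀ A : Set ℕ, A.Finite → A ∉ U

/-- `ω* = βℕ ∖ ℕ`: the space of nonprincipal ultrafilters on ℕ with the Stone topology
(as a subspace of the space of all ultrafilters on ℕ). -/
def OmegaStar : Type := {U : Ultrafilter ℕ // Nonprincipal U}

instance : TopologicalSpace OmegaStar := instTopologicalSpaceSubtype

section AuxiliaryLemmas

open Cardinal




def FinToOne (f : ℕ → ℕ) : Prop := ∀ n : ℕ, (f ⁻¹' {n}).Finite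

lemma finToOne_preimage_finite {f : ℕ → ℕ} (hf : FinToOne f) {S : Set ℕ} (hS : S.Finite) :
    (f ⁻¹' S).Finite := by
  have : f ⁻¹' S = ⋃ n ∈ S, f ⁻¹' {n} := by
    ext x; simp
  rw [this]
  exact Set.Finite.biUnion hS (fun n _ => hf n)

lemma finToOne_image_infinite {f : ℕ → ℕ} (hf : FinToOne f) {W : Set ℕ} (hW : W.Infinite) :
    (f '' W).Infinite := by
  intro hfin
  exact hW ((finToOne_preimage_finite hf hfin).subset (fun x hx => Set.mem_preimage.2 ⟨x, hx, rfl⟩))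

lemma diff_preimage_finite_iff {f : ℕ → ℕ} (hf : FinToOne f) {W E : Set ℕ} :
    (W \ f ⁻¹' E).Finite ↔ (f '' W \ E).Finite := by
  constructor
  · intro h
    have : f '' W \ E ⊆ f '' (W \ f ⁻¹' E) := by
      rintro n ⟨⟨x, hxW, rfl⟩, hnE⟩
      exact ⟨x, ⟨hxW, hnE⟩, rfl⟩
    exact (h.image f).subset this
  · intro h
    have : W \ f ⁻¹' E ⊆ f ⁻¹' (f '' W \ E) := by
      rintro x ⟨hxW, hxE⟩
      exact ⟨⟨x, hxW, rfl⟩, hxE⟩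
    exact (finToOne_preimage_finite hf h).subset this

lemma inter_preimage_finite_iff {f : ℕ → ℕ} (hf : FinToOne f) {W R : Set ℕ} :
    (f ⁻¹' R ∩ W).Finite ↔ (R ∩ f '' W).Finite := by
  constructor
  · intro h
    have : R ∩ f '' W ⊆ f '' (f ⁻¹' R ∩ W) := by
      rintro n ⟨hnR, x, hxW, rfl⟩
      exact ⟨x, ⟨hnR, hxW⟩, rfl⟩
    exact (h.image f).subset this
  · intro h
    have : f ⁻¹' R ∩ W ⊆ f ⁻¹' (R ∩ f '' W) := by
      rintro x ⟨hxR, hxW⟩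
      exact ⟨hxR, ⟨x, hxW, rfl⟩⟩
    exact (finToOne_preimage_finite hf h).subset this

lemma np_iff_cofinite {U : Ultrafilter ℕ} : Nonprincipal U ↔ (U : Filter ℕ) ≤ Filter.cofinite := by
  constructor
  · intro h s hs
    rw [Filter.mem_cofinite] at hs
    by_contra hsU
    rw [Ultrafilter.mem_coe] at hsU
    exact h sᶜ hs ((Ultrafilter.compl_mem_iff_notMem).2 hsU)
  · intro h A hA hAU
    have hc : Aᶜ ∈ (U : Filter ℕ) := h (by simpa [Filter.mem_cofinite] using hA)
    rw [Ultrafilter.mem_coe] at hc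
    exact (Ultrafilter.compl_mem_iff_notMem.1 hc) hAU

lemma Nonprincipal.mem_infinite {U : Ultrafilter ℕ} (h : Nonprincipal U) {s : Set ℕ}
    (hs : s ∈ U) : s.Infinite := by
  by_contra hfin
  rw [Set.not_infinite] at hfin
  exact h s hfin hs

lemma exists_np_ultra {F : Filter ℕ} (h : ∀ s ∈ F, s.Infinite) :
    ∃ U : Ultrafilter ℕ, Nonprincipal U ∧ (↑U : Filter ℕ) ≤ F := by
  have hne : Filter.NeBot (F ⊓ Filter.cofinite) := by
    constructor
    intro hbot
    have : ∅ ∈ F ⊓ Filter.cofinite := by rw [hbot]; exact Filter.mem_bot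
    rcases (Filter.mem_inf_iff).1 this with ⟨a, ha, b, hb, hab⟩
    have hainf := h a ha
    rw [Filter.mem_cofinite] at hb
    have : (a ∩ b).Nonempty := by
      have heq : a \ bᶜ = a ∩ b := by ext x; simp [Set.mem_diff]
      rw [← heq]
      exact (hainf.diff hb).nonempty
    rw [← hab] at this
    exact Set.not_nonempty_empty this
  refine ⟨Ultrafilter.of (F ⊓ Filter.cofinite), ?_, ?_⟩
  · rw [np_iff_cofinite]
    exact le_trans (Ultrafilter.of_le _) inf_le_right
  · exact le_trans (Ultrafilter.of_le _) inf_le_left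


def Dominating (D : Set (ℕ → ℕ)) : Prop :=
  ∀ f : ℕ → ℕ, ∃ g ∈ D, ∀ᶠ n in Filter.atTop, f n ≤ g n

lemma dominating_univ : Dominating univ := fun f => ⟨f, mem_univ f, by simp⟩

noncomputable def dNum : Cardinal :=
  sInf {c | ∃ D : Set (ℕ → ℕ), Dominating D ∧ #↥D = c}

lemma exists_dom_family : ∃ D : Set (ℕ → ℕ), Dominating D ∧ #↥D = dNum := by
  have : dNum ∈ {c | ∃ D : Set (ℕ → ℕ), Dominating D ∧ #↥D = c} :=
    csInf_mem ⟨#↥(univ : Set (ℕ → ℕ)), univ, dominating_univ, rfl⟩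
  exact this

lemma dNum_le_of_dominating {D : Set (ℕ → ℕ)} (hD : Dominating D) : dNum ≤ #↥D :=
  csInf_le (OrderBot.bddBelow _) ⟨D, hD, rfl⟩

lemma not_dominating_of_lt {E : Set (ℕ → ℕ)} (h : #↥E < dNum) : ¬ Dominating E :=
  fun hd => absurd (dNum_le_of_dominating hd) (not_le.2 h)

lemma dominating_not_countable {D : Set (ℕ → ℕ)} (hD : Dominating D) : ¬ D.Countable := by
  intro hc
  obtain ⟨g₀, hg₀, -⟩ := hD (fun _ => 0)
  obtain ⟨e, he⟩ := Set.Countable.exists_eq_range hc ⟨g₀, hg₀⟩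
  set f : ℕ → ℕ := fun n => (Finset.range (n + 1)).sup (fun i => e i n) + 1 with hf
  obtain ⟨g, hgD, hev⟩ := hD f
  rw [he, Set.mem_range] at hgD
  obtain ⟨i, rfl⟩ := hgD
  rcases (hev.and (Filter.eventually_ge_atTop i)).exists with ⟨n, hle, hni⟩
  have hi : i ∈ Finset.range (n + 1) := by simp [Nat.lt_succ_of_le hni]
  have h1 : e i n ≤ (Finset.range (n + 1)).sup (fun i => e i n) :=
    Finset.le_sup (f := fun i => e i n) hi
  have h2 : f n = (Finset.range (n + 1)).sup (fun i => e i n) + 1 := rfl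
  omega

lemma aleph0_lt_dNum : Cardinal.aleph0 < dNum := by
  obtain ⟨D, hD, hcard⟩ := exists_dom_family
  rw [← hcard]
  by_contra hle
  push_neg at hle
  exact dominating_not_countable hD ((Set.countable_coe_iff).1 (Cardinal.mk_le_aleph0_iff.1 hle))

def IsPPoint (U : Ultrafilter ℕ) : Prop :=
  ∀ T : ℕ → Set ℕ, (∀ k, T k ∈ U) → (∀ k, T (k + 1) ⊆ T k) →
    ∃ C ∈ U, ∀ k, (C \ T k).Finite

lemma ketonen (H : Ultrafilter ℕ) (hnp : Nonprincipal H) {J : Type} (b : J → Set ℕ)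
    (hb : ∀ j, b j ∈ H) (hbase : ∀ S ∈ H, ∃ j, (b j \ S).Finite)
    (hsm : ∀ gf : J → ℕ → ℕ, ¬ Dominating (Set.range gf)) : IsPPoint H := by
  intro T hT hTdec
  have hanti : Antitone T := antitone_nat_of_succ_le hTdec
  have hne : ∀ j k, {x | x ∈ b j ∩ T k ∧ k ≤ x}.Nonempty := by
    intro j k
    have hmem : b j ∩ T k ∈ H := Filter.inter_mem (hb j) (hT k)
    obtain ⟨x, hx, hxk⟩ := (hnp.mem_infinite hmem).exists_gt k
    exact ⟨x, hx, le_of_lt hxk⟩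
  set g : J → ℕ → ℕ := fun j k => sInf {x | x ∈ b j ∩ T k ∧ k ≤ x} with hgdef
  have hgmem : ∀ j k, g j k ∈ b j ∩ T k ∧ k ≤ g j k := fun j k => Nat.sInf_mem (hne j k)
  have hnd := hsm g
  unfold Dominating at hnd
  push_neg at hnd
  obtain ⟨f, hf⟩ := hnd
  have freq : ∀ j, ∃ᶠ k in Filter.atTop, g j k < f k := by
    intro j
    have := hf (g j) ⟨j, rfl⟩
    exact this.mono (fun k hk => by omega)
  set h : ℕ → ℕ := fun n => (Finset.range (n + 1)).sup f + n + 1 with hh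
  have hmono : StrictMono h := by
    apply strictMono_nat_of_lt_succ
    intro n
    have h1 : (Finset.range (n + 1)).sup f ≤ (Finset.range (n + 1 + 1)).sup f :=
      Finset.sup_mono (by intro x hx; simp at hx ⊢; omega)
    have e1 : h n = (Finset.range (n + 1)).sup f + n + 1 := rfl
    have e2 : h (n + 1) = (Finset.range (n + 1 + 1)).sup f + (n + 1) + 1 := rfl
    omega
  have hfh : ∀ n, f n < h n := by
    intro n
    have h1 : f n ≤ (Finset.range (n + 1)).sup f := Finset.le_sup (Finset.self_mem_range_succ n)
    have e1 : h n = (Finset.range (n + 1)).sup f + n + 1 := rfl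
    omega
  set C := {x | ∀ k, h k ≤ x → x ∈ T k} with hC
  have hCdiff : ∀ k, (C \ T k).Finite := by
    intro k
    apply (Set.finite_Iio (h k)).subset
    rintro x ⟨hxC, hxT⟩
    rw [Set.mem_Iio]
    by_contra hlt
    push_neg at hlt
    exact hxT (hxC k hlt)
  refine ⟨C, ?_, hCdiff⟩
  by_contra hCmem
  have hCc : Cᶜ ∈ H := Ultrafilter.compl_mem_iff_notMem.2 hCmem
  obtain ⟨j, hj⟩ := hbase _ hCc
  have hbjC : (b j ∩ C).Finite := by
    have : b j \ Cᶜ = b j ∩ C := by ext x; simp [Set.mem_diff]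
    rwa [this] at hj
  obtain ⟨M, hM⟩ := hbjC.bddAbove
  obtain ⟨k, hkM, hklt⟩ := (Filter.frequently_atTop).1 (freq j) (M + 1)
  have hm := hgmem j k
  have hmC : g j k ∈ C := by
    intro k' hk'
    by_cases hkk : k' ≤ k
    · exact hanti hkk hm.1.2
    · exfalso
      push_neg at hkk
      have h1 : h k < h k' := hmono hkk
      have h2 : f k < h k := hfh k
      omega
  have : g j k ≤ M := hM ⟨hm.1.1, hmC⟩
  omega
def Cuts (c : ℕ → ℕ) : Prop := StrictMono c ∧ c 0 = 0

noncomputable def idxc (c : ℕ → ℕ) (x : ℕ) : ℕ := Nat.findGreatest (fun j => c j ≤ x) x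

lemma idxc_le {c : ℕ → ℕ} (hc : Cuts c) (x : ℕ) : c (idxc c x) ≤ x :=
  Nat.findGreatest_spec (P := fun j => c j ≤ x) (Nat.zero_le x)
    (by show c 0 ≤ x; rw [hc.2]; exact Nat.zero_le x)

lemma idxc_lt {c : ℕ → ℕ} (hc : Cuts c) (x : ℕ) : x < c (idxc c x + 1) := by
  by_cases hx : idxc c x + 1 ≤ x
  · have := Nat.findGreatest_is_greatest (P := fun j => c j ≤ x)
      (show idxc c x < idxc c x + 1 by omega) hx
    simp only [not_le] at this
    exact this
  · push_neg at hx
    have h1 : x ≤ idxc c x := by omega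
    have h2 : idxc c x + 1 ≤ c (idxc c x + 1) := hc.1.le_apply
    omega

lemma idxc_ge {c : ℕ → ℕ} (hc : Cuts c) {m x : ℕ} (h : c m ≤ x) : m ≤ idxc c x :=
  Nat.le_findGreatest (le_trans hc.1.le_apply h) h

lemma idxc_le_of_lt {c : ℕ → ℕ} (hc : Cuts c) {m x : ℕ} (h : x < c (m + 1)) :
    idxc c x ≤ m := by
  by_contra hlt
  push_neg at hlt
  have : c (m + 1) ≤ c (idxc c x) := hc.1.monotone hlt
  have := idxc_le hc x
  omega

lemma finToOne_idxc {c : ℕ → ℕ} (hc : Cuts c) : FinToOne (idxc c) := by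
  intro n
  apply (Set.finite_Iio (c (n + 1))).subset
  intro x hx
  have hx' : idxc c x = n := hx
  have := idxc_lt hc x
  rw [hx'] at this
  exact this

def Tsep (R : Set ℕ) : Set ℕ := {i | ∀ j ∈ R, i + 2 ≤ j ∨ j + 2 ≤ i}

def Linked2 (U V : Ultrafilter ℕ) (c : ℕ → ℕ) : Prop :=
  ∀ X ∈ U, ∀ Y ∈ V, ∀ N : ℕ, ∃ k, N ≤ k ∧
    (∃ x ∈ X, idxc c x = k ∨ idxc c x = k + 1) ∧
    (∃ y ∈ Y, idxc c y = k ∨ idxc c y = k + 1)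

lemma separation {U V : Ultrafilter ℕ} {c : ℕ → ℕ} {R : Set ℕ}
    (hX : idxc c ⁻¹' R ∈ U) (hY : idxc c ⁻¹' (Tsep R) ∈ V) (hL : Linked2 U V c) : False := by
  obtain ⟨k, -, ⟨x, hx, hxk⟩, ⟨y, hy, hyk⟩⟩ := hL _ hX _ hY 0
  have hxR : idxc c x ∈ R := hx
  have hyT : idxc c y ∈ Tsep R := hy
  have := hyT _ hxR
  rcases hxk with h1 | h1 <;> rcases hyk with h2 | h2 <;> omega

noncomputable def cfp (f : ℕ → ℕ) : ℕ → ℕ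
  | 0 => 0
  | (k + 1) => max (cfp f k + 1) (sSup (f ⁻¹' (f '' (Set.Iio (cfp f k)))) + 1)

lemma cfp_cuts (f : ℕ → ℕ) : Cuts (cfp f) := by
  constructor
  · apply strictMono_nat_of_lt_succ
    intro n
    have : cfp f (n + 1) = max (cfp f n + 1) (sSup (f ⁻¹' (f '' (Set.Iio (cfp f n)))) + 1) := rfl
    have h1 : cfp f n + 1 ≤ cfp f (n + 1) := by rw [this]; exact le_max_left _ _
    omega
  · rfl

lemma cfp_key {f : ℕ → ℕ} (hf : FinToOne f) {x y j : ℕ} (hfxy : f x = f y)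
    (hy : y < cfp f j) : x < cfp f (j + 1) := by
  have hmem : x ∈ f ⁻¹' (f '' (Set.Iio (cfp f j))) := ⟨y, Set.mem_Iio.2 hy, hfxy.symm⟩
  have hbdd : BddAbove (f ⁻¹' (f '' (Set.Iio (cfp f j)))) :=
    (finToOne_preimage_finite hf ((Set.finite_Iio _).image f)).bddAbove
  have h1 := le_csSup hbdd hmem
  have h2 : cfp f (j + 1) = max (cfp f j + 1) (sSup (f ⁻¹' (f '' (Set.Iio (cfp f j)))) + 1) := rfl
  have h3 : sSup (f ⁻¹' (f '' (Set.Iio (cfp f j)))) + 1 ≤ cfp f (j + 1) := by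
    rw [h2]; exact le_max_right _ _
  omega

lemma tail_mem {U : Ultrafilter ℕ} (hU : Nonprincipal U) (n : ℕ) : {x | n ≤ x} ∈ U := by
  have : {x : ℕ | n ≤ x} ∈ Filter.cofinite := by
    rw [Filter.mem_cofinite]
    apply (Set.finite_Iio n).subset
    intro x hx
    simp only [Set.mem_compl_iff, Set.mem_setOf_eq, not_le] at hx
    exact hx
  exact (np_iff_cofinite.1 hU) this

lemma lemmaA {f : ℕ → ℕ} (hf : FinToOne f) {U V : Ultrafilter ℕ}
    (hU : Nonprincipal U) (hV : Nonprincipal V)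
    (heq : U.map f = V.map f) : Linked2 U V (cfp f) := by
  intro X hX Y hY N
  have hXU : X ∩ {x | cfp f N ≤ x} ∈ U := Filter.inter_mem hX (tail_mem hU _)
  have hYV : Y ∩ {x | cfp f N ≤ x} ∈ V := Filter.inter_mem hY (tail_mem hV _)
  have hXm : f '' (X ∩ {x | cfp f N ≤ x}) ∈ U.map f := by
    rw [Ultrafilter.mem_map]
    exact Filter.mem_of_superset hXU (Set.subset_preimage_image f _)
  have hYm : f '' (Y ∩ {x | cfp f N ≤ x}) ∈ U.map f := by
    rw [heq, Ultrafilter.mem_map]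
    exact Filter.mem_of_superset hYV (Set.subset_preimage_image f _)
  obtain ⟨n, ⟨x, hxX', hfx⟩, ⟨y, hyY', hfy⟩⟩ :=
    Ultrafilter.nonempty_of_mem (Filter.inter_mem hXm hYm)
  have hfxy : f x = f y := by rw [hfx, hfy]
  have hxa := idxc_lt (cfp_cuts f) x
  have hya := idxc_lt (cfp_cuts f) y
  have hab : idxc (cfp f) x ≤ idxc (cfp f) y + 1 :=
    idxc_le_of_lt (cfp_cuts f) (cfp_key hf hfxy hya)
  have hba : idxc (cfp f) y ≤ idxc (cfp f) x + 1 :=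
    idxc_le_of_lt (cfp_cuts f) (cfp_key hf hfxy.symm hxa)
  have haN : N ≤ idxc (cfp f) x := idxc_ge (cfp_cuts f) hxX'.2
  have hbN : N ≤ idxc (cfp f) y := idxc_ge (cfp_cuts f) hyY'.2
  refine ⟨min (idxc (cfp f) x) (idxc (cfp f) y), le_min haN hbN,
    ⟨x, hxX'.1, by omega⟩, ⟨y, hyY'.1, by omega⟩⟩

def cE (g : ℕ → ℕ) : ℕ → ℕ
  | 0 => 0
  | (k + 1) => max (cE g k + 1) (g (cE g k))

lemma cE_cuts (g : ℕ → ℕ) : Cuts (cE g) := by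
  constructor
  · apply strictMono_nat_of_lt_succ
    intro n
    have h1 : cE g n + 1 ≤ cE g (n + 1) := le_max_left _ _
    omega
  · rfl

def StrongCoarser (c' c : ℕ → ℕ) : Prop :=
  ∃ K, ∀ k, K ≤ k → ∃ n, c' k ≤ c n ∧ c (n + 2) ≤ c' (k + 1)

lemma sc_of_dom {c g : ℕ → ℕ} (hc : Cuts c)
    (hd : ∀ᶠ m in Filter.atTop, c (idxc c m + 3) ≤ g m) :
    StrongCoarser (cE g) c := by
  obtain ⟨M, hM⟩ := Filter.eventually_atTop.1 hd
  refine ⟨M, fun k hk => ?_⟩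
  have hmM : M ≤ cE g k := le_trans hk (cE_cuts g).1.le_apply
  refine ⟨idxc c (cE g k) + 1, le_of_lt (idxc_lt hc _), ?_⟩
  calc c (idxc c (cE g k) + 1 + 2) = c (idxc c (cE g k) + 3) := by ring_nf
    _ ≤ g (cE g k) := hM _ hmM
    _ ≤ cE g (k + 1) := le_max_right _ _

lemma linked2_transfer {U V : Ultrafilter ℕ} {c c' : ℕ → ℕ} (hc : Cuts c) (hc' : Cuts c')
    (hL : Linked2 U V c) (hsc : StrongCoarser c' c) : Linked2 U V c' := by
  intro X hX Y hY N'
  obtain ⟨K, hK⟩ := hsc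
  obtain ⟨n, hnB, ⟨x, hxX, hxk⟩, ⟨y, hyY, hyk⟩⟩ := hL X hX Y hY (c' (max N' K + 1))
  set k := idxc c' (c n) with hk
  have hk1 : c' k ≤ c n := idxc_le hc' _
  have hk2 : c n < c' (k + 1) := idxc_lt hc' _
  have hkge : max N' K + 1 ≤ k := by
    apply idxc_ge hc'
    calc c' (max N' K + 1) ≤ n := hnB
      _ ≤ c n := hc.1.le_apply
  obtain ⟨m, hm1, hm2⟩ := hK (k + 1) (by omega)
  have hnm : n < m := by
    have : c n < c m := lt_of_lt_of_le hk2 hm1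
    exact (hc.1.lt_iff_lt).1 this
  have hupper : c (n + 2) ≤ c' (k + 1 + 1) :=
    le_trans (hc.1.monotone (by omega : n + 2 ≤ m + 2)) hm2
  have key : ∀ z : ℕ, (idxc c z = n ∨ idxc c z = n + 1) → (idxc c' z = k ∨ idxc c' z = k + 1) := by
    intro z hz
    have hz1 : c n ≤ z := by
      have h1 := idxc_le hc z
      rcases hz with h | h
      · rw [h] at h1; exact h1
      · rw [h] at h1; exact le_trans (hc.1.monotone (by omega)) h1
    have hz2 : z < c (n + 2) := by
      have h1 := idxc_lt hc z
      rcases hz with h | h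
      · rw [h] at h1; exact lt_of_lt_of_le h1 (hc.1.monotone (by omega))
      · rw [h] at h1; exact h1
    have ha : k ≤ idxc c' z := idxc_ge hc' (le_trans hk1 hz1)
    have hb : idxc c' z ≤ k + 1 := idxc_le_of_lt hc' (lt_of_lt_of_le hz2 hupper)
    omega
  exact ⟨k, by omega, ⟨x, hxX, key x hxk⟩, ⟨y, hyY, key y hyk⟩⟩

def rho (θ : ℕ) : ℕ → ℕ := fun i => (i - θ) / 5

def MID (θ : ℕ) (D : Set ℕ) : Set ℕ :=
  {i | (i - θ) / 5 ∈ D ∧ 1 ≤ (i - θ) % 5 ∧ (i - θ) % 5 ≤ 3}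

def EDG (θ : ℕ) : Set ℕ := {i | (i - θ) % 5 = 0 ∨ (i - θ) % 5 = 4}

lemma finToOne_rho (θ : ℕ) : FinToOne (rho θ) := by
  intro j
  apply (Set.finite_Iio (5 * j + θ + 5)).subset
  intro i hi
  have : (i - θ) / 5 = j := hi
  simp only [Set.mem_Iio]
  omega

lemma mem_tsep_mid {θ : ℕ} {D : Set ℕ} {i : ℕ} (h : i ∉ rho θ ⁻¹' D) :
    i ∈ Tsep (MID θ D) := by
  intro i' hi'
  obtain ⟨hjD, hu1, hu2⟩ := hi'
  by_contra hcon
  push_neg at hcon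
  have : (i - θ) / 5 = (i' - θ) / 5 := by omega
  apply h
  show (i - θ) / 5 ∈ D
  rw [this]
  exact hjD

lemma not_mid_cases {θ : ℕ} {D : Set ℕ} {i : ℕ} (h : i ∉ MID θ D) :
    i ∈ MID θ Dᶜ ∪ EDG θ := by
  by_cases hr : 1 ≤ (i - θ) % 5 ∧ (i - θ) % 5 ≤ 3
  · left
    refine ⟨?_, hr.1, hr.2⟩
    intro hD
    exact h ⟨hD, hr.1, hr.2⟩
  · right
    show (i - θ) % 5 = 0 ∨ (i - θ) % 5 = 4
    omega

lemma mid_disjoint {θ : ℕ} {D : Set ℕ} {i : ℕ} (h1 : i ∈ MID θ D) (h2 : i ∈ MID θ Dᶜ) :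
    False := h2.1 h1.1

lemma edg_escape : ∀ i : ℕ, 4 ≤ i → ∃ θ, θ < 5 ∧ i ∉ EDG θ := by
  intro i hi
  refine ⟨(i + 2) % 5, by omega, ?_⟩
  intro hedg
  have : (i - (i + 2) % 5) % 5 = 0 ∨ (i - (i + 2) % 5) % 5 = 4 := hedg
  omega

lemma stuck_ultrafilter {c : ℕ → ℕ} (hc : Cuts c) {I : Type} (A B : I → Set ℕ)
    (hA : ∀ t : Finset I, (⋂ i ∈ t, A i).Infinite)
    (hB : ∀ t : Finset I, (⋂ i ∈ t, B i).Infinite)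
    (stuck : ∀ R : Set ℕ,
      ¬((∀ t : Finset I, ((⋂ i ∈ t, A i) ∩ idxc c ⁻¹' R).Infinite) ∧
        (∀ t : Finset I, ((⋂ i ∈ t, B i) ∩ idxc c ⁻¹' (Tsep R)).Infinite))) :
    ∃ (H : Ultrafilter ℕ) (b : Finset I → Set ℕ), Nonprincipal H ∧ (∀ t, b t ∈ H) ∧
      (∀ S ∈ H, ∃ t, (b t \ S).Finite) := by
  classical
  set sA : Finset I → Set ℕ := fun t => idxc c '' (⋂ i ∈ t, A i) with hsA
  set sB : Finset I → Set ℕ := fun t => idxc c '' (⋂ i ∈ t, B i) with hsB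
  have hsAinf : ∀ t, (sA t).Infinite := fun t =>
    finToOne_image_infinite (finToOne_idxc hc) (hA t)
  have hsBinf : ∀ t, (sB t).Infinite := fun t =>
    finToOne_image_infinite (finToOne_idxc hc) (hB t)
  have hmono : ∀ (C : I → Set ℕ) (t t' : Finset I), t ⊆ t' →
      idxc c '' (⋂ i ∈ t', C i) ⊆ idxc c '' (⋂ i ∈ t, C i) := by
    intro C t t' hsub
    apply Set.image_mono
    intro x hx
    simp only [Set.mem_iInter] at hx ⊢
    exact fun i hi => hx i (hsub hi)
  -- choice of θ
  have hθex : ∃ θ, θ < 5 ∧ ∀ t : Finset I, ¬(sA t \ EDG θ).Finite := by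
    by_contra hcon
    push_neg at hcon
    choose tf htf using fun θ (h : θ < 5) => hcon θ h
    set t0 := tf 0 (by omega) ∪ tf 1 (by omega) ∪ tf 2 (by omega) ∪ tf 3 (by omega)
      ∪ tf 4 (by omega) with ht0
    have hsubs : ∀ θ (h : θ < 5), (sA t0 \ EDG θ).Finite := by
      intro θ h
      apply (htf θ h).subset
      apply Set.diff_subset_diff_left
      apply hmono
      interval_cases θ <;> intro x hx <;> simp only [ht0, Finset.mem_union] <;> tauto
    have : sA t0 ⊆ (Set.Iio 4) ∪ ((sA t0 \ EDG 0) ∪ (sA t0 \ EDG 1) ∪ (sA t0 \ EDG 2)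
        ∪ (sA t0 \ EDG 3) ∪ (sA t0 \ EDG 4)) := by
      intro i hi
      by_cases h4 : 4 ≤ i
      · obtain ⟨θ, hθ5, hθn⟩ := edg_escape i h4
        right
        interval_cases θ <;> simp only [Set.mem_union] <;> tauto
      · left; simp only [Set.mem_Iio]; omega
    exact hsAinf t0 (Set.Finite.subset (Set.Finite.union (Set.finite_Iio 4)
      ((((((hsubs 0 (by omega)).union (hsubs 1 (by omega))).union (hsubs 2 (by omega))).union
        (hsubs 3 (by omega))).union (hsubs 4 (by omega))))) this)
  obtain ⟨θ, hθ5, hθ⟩ := hθex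
  -- star
  have star : ∀ D : Set ℕ, (∃ t, (sA t \ (MID θ Dᶜ ∪ EDG θ)).Finite) ∨
      (∃ t, ((rho θ '' sB t) \ D).Finite) := by
    intro D
    have := stuck (MID θ D)
    rw [not_and_or] at this
    rcases this with h | h
    · push_neg at h
      obtain ⟨t, ht⟩ := h
      left
      refine ⟨t, ?_⟩
      have h1 : (MID θ D ∩ sA t).Finite := by
        rw [← inter_preimage_finite_iff (finToOne_idxc hc)]
        exact ht.subset (by intro x hx; exact ⟨hx.2, hx.1⟩)
      apply h1.subset
      rintro i ⟨hiA, hin⟩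
      refine ⟨?_, hiA⟩
      by_contra hmid
      exact hin (not_mid_cases hmid)
    · push_neg at h
      obtain ⟨t, ht⟩ := h
      right
      refine ⟨t, ?_⟩
      rw [← diff_preimage_finite_iff (finToOne_rho θ)]
      have h1 : (Tsep (MID θ D) ∩ sB t).Finite := by
        rw [← inter_preimage_finite_iff (finToOne_idxc hc)]
        exact ht.subset (by intro x hx; exact ⟨hx.2, hx.1⟩)
      apply h1.subset
      rintro i ⟨hiB, hin⟩
      exact ⟨mem_tsep_mid hin, hiB⟩
  -- ultra claim
  have hUlt : ∀ D : Set ℕ, (∃ t, ((rho θ '' sB t) \ D).Finite) ∨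
      (∃ t, ((rho θ '' sB t) \ Dᶜ).Finite) := by
    intro D
    rcases star D with ⟨t, ht⟩ | h
    · rcases star Dᶜ with ⟨t', ht'⟩ | h'
      · exfalso
        rw [compl_compl] at ht'
        apply hθ (t ∪ t')
        have hsub : sA (t ∪ t') \ EDG θ ⊆
            (sA t \ (MID θ Dᶜ ∪ EDG θ)) ∪ (sA t' \ (MID θ D ∪ EDG θ)) := by
          intro i ⟨hi, hie⟩
          have hit : i ∈ sA t := hmono A t (t ∪ t') Finset.subset_union_left hi
          have hit' : i ∈ sA t' := hmono A t' (t ∪ t') Finset.subset_union_right hi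
          by_cases h1 : i ∈ MID θ Dᶜ
          · by_cases h2 : i ∈ MID θ D
            · exact absurd (mid_disjoint h2 h1) (fun x => x)
            · right; exact ⟨hit', by simp [h2, hie]⟩
          · left; exact ⟨hit, by simp [h1, hie]⟩
        exact (ht.union ht').subset hsub
      · right; exact h'
    · left; exact h
  -- the filter
  set 𝔖 : Filter ℕ :=
    { sets := {S | ∃ t : Finset I, ((rho θ '' sB t) \ S).Finite}
      univ_sets := ⟨∅, by simp⟩
      sets_of_superset := by
        rintro S S' ⟨t, ht⟩ hsub
        exact ⟨t, ht.subset (Set.diff_subset_diff_right hsub)⟩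
      inter_sets := by
        rintro S S' ⟨t, ht⟩ ⟨t', ht'⟩
        refine ⟨t ∪ t', ?_⟩
        have h1 : rho θ '' sB (t ∪ t') ⊆ rho θ '' sB t :=
          Set.image_mono (hmono B t (t ∪ t') Finset.subset_union_left)
        have h2 : rho θ '' sB (t ∪ t') ⊆ rho θ '' sB t' :=
          Set.image_mono (hmono B t' (t ∪ t') Finset.subset_union_right)
        apply (ht.union ht').subset
        rintro i ⟨hi, hin⟩
        rw [Set.mem_inter_iff, not_and_or] at hin
        rcases hin with h | h
        · left; exact ⟨h1 hi, h⟩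
        · right; exact ⟨h2 hi, h⟩ } with h𝔖
  have hmem𝔖 : ∀ S : Set ℕ, S ∈ 𝔖 ↔ ∃ t : Finset I, ((rho θ '' sB t) \ S).Finite := by
    intro S; rfl
  have hrBinf : ∀ t, (rho θ '' sB t).Infinite := fun t =>
    finToOne_image_infinite (finToOne_rho θ) (hsBinf t)
  have hproper : ∀ S : Set ℕ, S ∈ 𝔖 → Sᶜ ∈ 𝔖 → False := by
    intro S hS hSc
    rw [hmem𝔖] at hS hSc
    obtain ⟨t, ht⟩ := hS
    obtain ⟨t', ht'⟩ := hSc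
    apply hrBinf (t ∪ t')
    have hsub : rho θ '' sB (t ∪ t') ⊆ ((rho θ '' sB t) \ S) ∪ ((rho θ '' sB t') \ Sᶜ) := by
      intro i hi
      have hit : i ∈ rho θ '' sB t :=
        Set.image_mono (hmono B t (t ∪ t') Finset.subset_union_left) hi
      have hit' : i ∈ rho θ '' sB t' :=
        Set.image_mono (hmono B t' (t ∪ t') Finset.subset_union_right) hi
      by_cases h : i ∈ S
      · right; exact ⟨hit', by simpa using h⟩
      · left; exact ⟨hit, h⟩
    exact (ht.union ht').subset hsub
  have hcompl : ∀ S : Set ℕ, Sᶜ ∉ 𝔖 ↔ S ∈ 𝔖 := by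
    intro S
    constructor
    · intro h
      rcases hUlt S with h' | h'
      · rw [hmem𝔖]; exact h'
      · exfalso; apply h; rw [hmem𝔖]; exact h'
    · intro hS hSc
      exact hproper S hS hSc
  refine ⟨Ultrafilter.ofComplNotMemIff 𝔖 hcompl, fun t => rho θ '' sB t, ?_, ?_, ?_⟩
  · intro S hfin hS
    have hS' : S ∈ 𝔖 := hS
    rw [hmem𝔖] at hS'
    obtain ⟨t, ht⟩ := hS'
    apply hrBinf t
    apply (ht.union hfin).subset
    intro i hi
    by_cases h : i ∈ S
    · right; exact h
    · left; exact ⟨hi, h⟩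
  · intro t
    show (rho θ '' sB t) ∈ 𝔖
    rw [hmem𝔖]
    exact ⟨t, by simp⟩
  · intro S hS
    have hS' : S ∈ 𝔖 := hS
    rw [hmem𝔖] at hS'
    exact hS'

lemma mk_finset_le_max (J : Type) : #(Finset J) ≤ max Cardinal.aleph0 #J := by
  by_cases h : Infinite J
  · haveI := h
    rw [Cardinal.mk_finset_of_infinite]
    exact le_max_right _ _
  · haveI : Finite J := not_infinite_iff_finite.mp h
    haveI : Fintype J := Fintype.ofFinite J
    exact le_trans (le_of_lt (Cardinal.lt_aleph0_of_finite _)) (le_max_left _ _)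

lemma exists_ppoint
    (ncf : ∀ U V : Ultrafilter ℕ, Nonprincipal U → Nonprincipal V →
      ∃ f : ℕ → ℕ, (∀ n : ℕ, (f ⁻¹' {n}).Finite) ∧ U.map f = V.map f) :
    ∃ W : Ultrafilter ℕ, Nonprincipal W ∧ IsPPoint W := by
  classical
  by_contra hno
  push_neg at hno
  obtain ⟨D₀, hD₀, hcardD₀⟩ := exists_dom_family
  obtain ⟨r, wo, hord⟩ := Cardinal.ord_eq ↥D₀
  haveI : IsWellOrder ↥D₀ r := wo
  have wf : WellFounded r := IsWellFounded.wf
  set step : (x : ↥D₀) → ((y : ↥D₀) → r y x → Set ℕ × Set ℕ) → Set ℕ × Set ℕ := fun x ih =>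
    if h : ∃ R : Set ℕ,
        (∀ t : Finset {y // r y x},
          ((⋂ y ∈ t, (ih y.1 y.2).1) ∩ idxc (cE x.1) ⁻¹' R).Infinite) ∧
        (∀ t : Finset {y // r y x},
          ((⋂ y ∈ t, (ih y.1 y.2).2) ∩ idxc (cE x.1) ⁻¹' (Tsep R)).Infinite)
    then (idxc (cE x.1) ⁻¹' h.choose, idxc (cE x.1) ⁻¹' (Tsep h.choose))
    else (Set.univ, Set.univ) with hstep
  set K : ↥D₀ → Set ℕ × Set ℕ := WellFounded.fix wf step with hKdef
  have hKeq : ∀ x, K x = step x (fun y _ => K y) := fun x => WellFounded.fix_eq wf step x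
  set Kcond : ↥D₀ → Prop := fun x => ∃ R : Set ℕ,
      (∀ t : Finset {y // r y x},
        ((⋂ y ∈ t, (K y.1).1) ∩ idxc (cE x.1) ⁻¹' R).Infinite) ∧
      (∀ t : Finset {y // r y x},
        ((⋂ y ∈ t, (K y.1).2) ∩ idxc (cE x.1) ⁻¹' (Tsep R)).Infinite)
    with hKconddef
  have hKx : ∀ x, K x = if h : Kcond x
      then (idxc (cE x.1) ⁻¹' h.choose, idxc (cE x.1) ⁻¹' (Tsep h.choose))
      else (Set.univ, Set.univ) := by
    intro x
    rw [hKeq x]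
  have hlin : ∀ t : Finset ↥D₀, t.Nonempty → ∃ z ∈ t, ∀ y ∈ t, r y z ∨ y = z := by
    intro t ht
    induction t using Finset.induction_on with
    | empty => exact absurd ht (by simp)
    | insert _ _ ha =>
      rename_i a s ih
      rcases s.eq_empty_or_nonempty with rfl | hs
      · exact ⟨a, by simp, by simp⟩
      · obtain ⟨z, hz, hzm⟩ := ih hs
        rcases trichotomous_of r a z with hr | hr | hr
        · refine ⟨z, by simp [hz], ?_⟩
          intro y hy
          rcases Finset.mem_insert.1 hy with rfl | hy'
          · exact Or.inl hr
          · exact hzm y hy'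
        · refine ⟨z, by simp [hz], ?_⟩
          intro y hy
          rcases Finset.mem_insert.1 hy with rfl | hy'
          · exact Or.inr hr
          · exact hzm y hy'
        · refine ⟨a, by simp, ?_⟩
          intro y hy
          rcases Finset.mem_insert.1 hy with rfl | hy'
          · exact Or.inr rfl
          · rcases hzm y hy' with h' | h'
            · exact Or.inl (_root_.trans h' hr)
            · exact Or.inl (h' ▸ hr)
  have hmain : ∀ x, Kcond x ∧
      (∀ t : Finset ↥D₀, (∀ y ∈ t, r y x ∨ y = x) →
        (⋂ y ∈ t, (K y).1).Infinite ∧ (⋂ y ∈ t, (K y).2).Infinite) := by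
    intro x₀
    refine wf.induction (C := fun x => Kcond x ∧
      (∀ t : Finset ↥D₀, (∀ y ∈ t, r y x ∨ y = x) →
        (⋂ y ∈ t, (K y).1).Infinite ∧ (⋂ y ∈ t, (K y).2).Infinite)) x₀ ?_
    intro x ih
    have hprior : ∀ (s : Finset {y // r y x}),
        (⋂ y ∈ s, (K y.1).1).Infinite ∧ (⋂ y ∈ s, (K y.1).2).Infinite := by
      intro s
      rcases s.eq_empty_or_nonempty with rfl | hne
      · constructor <;> simpa using Set.infinite_univ
      · set s' : Finset ↥D₀ := s.image Subtype.val with hs'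
        obtain ⟨z, hz, hzm⟩ := hlin s' (hne.image _)
        obtain ⟨y₀, hy₀s, rfl⟩ := Finset.mem_image.1 hz
        have hEq1 : (⋂ y ∈ s', (K y).1) = ⋂ y ∈ s, (K y.1).1 := by
          ext a
          simp only [Set.mem_iInter, hs', Finset.mem_image]
          constructor
          · intro h y hy
            exact h y.1 ⟨y, hy, rfl⟩
          · rintro h y ⟨y₁, hy₁, rfl⟩
            exact h y₁ hy₁
        have hEq2 : (⋂ y ∈ s', (K y).2) = ⋂ y ∈ s, (K y.1).2 := by
          ext a
          simp only [Set.mem_iInter, hs', Finset.mem_image]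
          constructor
          · intro h y hy
            exact h y.1 ⟨y, hy, rfl⟩
          · rintro h y ⟨y₁, hy₁, rfl⟩
            exact h y₁ hy₁
        have := (ih y₀.1 y₀.2).2 s' hzm
        exact ⟨hEq1 ▸ this.1, hEq2 ▸ this.2⟩
    have hcond : Kcond x := by
      by_contra hnc
      have stuck : ∀ R : Set ℕ,
          ¬((∀ t : Finset {y // r y x},
              ((⋂ y ∈ t, (K y.1).1) ∩ idxc (cE x.1) ⁻¹' R).Infinite) ∧
            (∀ t : Finset {y // r y x},
              ((⋂ y ∈ t, (K y.1).2) ∩ idxc (cE x.1) ⁻¹' (Tsep R)).Infinite)) :=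
        fun R hR => hnc ⟨R, hR⟩
      obtain ⟨H, b, hnp, hb, hbase⟩ := stuck_ultrafilter (cE_cuts x.1)
        (fun y : {y // r y x} => (K y.1).1) (fun y => (K y.1).2)
        (fun t => (hprior t).1) (fun t => (hprior t).2) stuck
      apply hno H hnp
      apply ketonen H hnp b hb hbase
      intro gf
      apply not_dominating_of_lt
      have h1 : #↥(Set.range gf) ≤ #(Finset {y // r y x}) := Cardinal.mk_range_le
      have h2 : #(Finset {y // r y x}) ≤ max Cardinal.aleph0 #{y // r y x} :=
        mk_finset_le_max _
      have h3 : #{y // r y x} < dNum := by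
        rw [← Ordinal.card_typein]
        apply Cardinal.lt_ord.1
        rw [show dNum.ord = Ordinal.type r by rw [← hcardD₀]; exact hord]
        exact Ordinal.typein_lt_type r x
      exact lt_of_le_of_lt (le_trans h1 h2) (max_lt aleph0_lt_dNum h3)
    refine ⟨hcond, ?_⟩
    have hKxval := hKx x
    rw [dif_pos hcond] at hKxval
    obtain ⟨hc1, hc2⟩ := hcond.choose_spec
    intro t hty
    haveI : DecidablePred (fun y : ↥D₀ => r y x) := fun _ => Classical.dec _
    set s : Finset {y // r y x} := (t.erase x).subtype (fun y => r y x) with hsdef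
    constructor
    · have hsub : (⋂ y ∈ s, (K y.1).1) ∩ idxc (cE x.1) ⁻¹' (Exists.choose hcond) ⊆
          ⋂ y ∈ t, (K y).1 := by
        rintro a ⟨ha1, ha2⟩
        simp only [Set.mem_iInter]
        intro y hy
        by_cases hyx : y = x
        · subst hyx
          rw [hKxval]
          exact ha2
        · have hr : r y x := (hty y hy).resolve_right hyx
          simp only [Set.mem_iInter] at ha1
          exact ha1 ⟨y, hr⟩ (by simp [hsdef, Finset.mem_subtype, Finset.mem_erase, hyx, hy])
      exact (hc1 s).mono hsub
    · have hsub : (⋂ y ∈ s, (K y.1).2) ∩ idxc (cE x.1) ⁻¹' (Tsep (Exists.choose hcond)) ⊆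
          ⋂ y ∈ t, (K y).2 := by
        rintro a ⟨ha1, ha2⟩
        simp only [Set.mem_iInter]
        intro y hy
        by_cases hyx : y = x
        · subst hyx
          rw [hKxval]
          exact ha2
        · have hr : r y x := (hty y hy).resolve_right hyx
          simp only [Set.mem_iInter] at ha1
          exact ha1 ⟨y, hr⟩ (by simp [hsdef, Finset.mem_subtype, Finset.mem_erase, hyx, hy])
      exact (hc2 s).mono hsub
  -- global finite-intersection properties
  have hIfin1 : ∀ ft : Finset ↥D₀, (⋂ y ∈ ft, (K y).1).Infinite := by
    intro ft
    rcases ft.eq_empty_or_nonempty with rfl | hne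
    · simpa using Set.infinite_univ
    · obtain ⟨z, _, hzm⟩ := hlin ft hne
      exact ((hmain z).2 ft hzm).1
  have hIfin2 : ∀ ft : Finset ↥D₀, (⋂ y ∈ ft, (K y).2).Infinite := by
    intro ft
    rcases ft.eq_empty_or_nonempty with rfl | hne
    · simpa using Set.infinite_univ
    · obtain ⟨z, _, hzm⟩ := hlin ft hne
      exact ((hmain z).2 ft hzm).2
  have key : ∀ (p : ↥D₀ → Set ℕ) (t : Set (Set ℕ)), t.Finite →
      (t ⊆ {A : Set ℕ | ∃ x, A = p x}) →
      ∃ ft : Finset ↥D₀, (⋂ y ∈ ft, p y) ⊆ ⋂₀ t := by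
    intro p t htfin
    refine Set.Finite.induction_on (motive := fun t _ => t ⊆ {A : Set ℕ | ∃ x, A = p x} →
      ∃ ft : Finset ↥D₀, (⋂ y ∈ ft, p y) ⊆ ⋂₀ t) t htfin ?_ ?_
    · intro _
      exact ⟨∅, by simp⟩
    · intro a s' ha hsf ih hsub
      obtain ⟨x, hxa⟩ := hsub (Set.mem_insert _ _)
      obtain ⟨ft, hft⟩ := ih (fun A hA => hsub (Set.mem_insert_of_mem _ hA))
      refine ⟨insert x ft, ?_⟩
      intro z hz
      simp only [Set.mem_iInter, Finset.mem_insert] at hz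
      rw [Set.sInter_insert]
      constructor
      · rw [hxa]
        exact hz x (Or.inl rfl)
      · apply hft
        simp only [Set.mem_iInter]
        exact fun y hy => hz y (Or.inr hy)
  have hgen1 : ∀ s ∈ Filter.generate {A : Set ℕ | ∃ x, A = (K x).1}, s.Infinite := by
    intro s hs
    rw [Filter.mem_generate_iff] at hs
    obtain ⟨t, htsub, htfin, hts⟩ := hs
    obtain ⟨ft, hft⟩ := key (fun x => (K x).1) t htfin htsub
    exact (hIfin1 ft).mono (le_trans hft hts)
  have hgen2 : ∀ s ∈ Filter.generate {A : Set ℕ | ∃ x, A = (K x).2}, s.Infinite := by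
    intro s hs
    rw [Filter.mem_generate_iff] at hs
    obtain ⟨t, htsub, htfin, hts⟩ := hs
    obtain ⟨ft, hft⟩ := key (fun x => (K x).2) t htfin htsub
    exact (hIfin2 ft).mono (le_trans hft hts)
  obtain ⟨U, hUnp, hUle⟩ := exists_np_ultra hgen1
  obtain ⟨V, hVnp, hVle⟩ := exists_np_ultra hgen2
  have hKU : ∀ x, (K x).1 ∈ U := fun x => hUle (Filter.mem_generate_of_mem ⟨x, rfl⟩)
  have hKV : ∀ x, (K x).2 ∈ V := fun x => hVle (Filter.mem_generate_of_mem ⟨x, rfl⟩)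
  obtain ⟨f, hf, heq⟩ := ncf U V hUnp hVnp
  have hL := lemmaA hf hUnp hVnp heq
  obtain ⟨g, hgD, hev⟩ := hD₀ (fun m => cfp f (idxc (cfp f) m + 3))
  have hsc := sc_of_dom (cfp_cuts f) hev
  have hL' := linked2_transfer (cfp_cuts f) (cE_cuts g) hL hsc
  set x : ↥D₀ := ⟨g, hgD⟩ with hxdef
  have hcondx := (hmain x).1
  have hKxv := hKx x
  rw [dif_pos hcondx] at hKxv
  have hXU : idxc (cE g) ⁻¹' (Exists.choose hcondx) ∈ U := by
    have := hKU x
    rw [hKxv] at this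
    exact this
  have hYV : idxc (cE g) ⁻¹' (Tsep (Exists.choose hcondx)) ∈ V := by
    have := hKV x
    rw [hKxv] at this
    exact this
  exact separation hXU hYV hL'

lemma val_continuous : Continuous (fun u : OmegaStar => u.1) := continuous_induced_dom

lemma omegaStar_isOpen_iff {s : Set OmegaStar} :
    IsOpen s ↔ ∃ t : Set (Ultrafilter ℕ), IsOpen t ∧ (fun u : OmegaStar => u.1) ⁻¹' t = s :=
  isOpen_induced_iff

lemma basic_of_open {O : Set (Ultrafilter ℕ)} (hO : IsOpen O) {w : Ultrafilter ℕ} (hw : w ∈ O) :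
    ∃ A : Set ℕ, A ∈ w ∧ {v : Ultrafilter ℕ | A ∈ v} ⊆ O := by
  obtain ⟨v, hvB, hwv, hvO⟩ :=
    TopologicalSpace.IsTopologicalBasis.exists_subset_of_mem_open
      ultrafilterBasis_is_basis hw hO
  obtain ⟨A, hA⟩ := hvB
  subst hA
  exact ⟨A, hwv, hvO⟩

lemma map_np {f : ℕ → ℕ} (hf : FinToOne f) {U : Ultrafilter ℕ} (h : Nonprincipal U) :
    Nonprincipal (U.map f) := by
  intro A hA hAU
  rw [Ultrafilter.mem_map] at hAU
  exact h _ (finToOne_preimage_finite hf hA) hAU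

lemma ultra_eq_of_le {U V : Ultrafilter ℕ} (h : ∀ s ∈ V, s ∈ U) : U = V :=
  Ultrafilter.eq_of_le (fun s hs => h s hs)

lemma np_iff_singleton {w : Ultrafilter ℕ} : Nonprincipal w ↔ ∀ n : ℕ, {n} ∉ w := by
  constructor
  · intro h n
    exact h {n} (Set.finite_singleton n)
  · intro h A hA hAw
    rw [show A = ⋃ n ∈ A, {n} by simp] at hAw
    obtain ⟨n, -, hn⟩ := (Ultrafilter.finite_biUnion_mem_iff hA).1 hAw
    exact h n hn

lemma exists_infinite_not_mem {S : Set ℕ} (hS : S.Infinite) (W : Ultrafilter ℕ) :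
    ∃ C : Set ℕ, C ⊆ S ∧ C.Infinite ∧ C ∉ W := by
  have e := hS.natEmbedding
  set C₁ : Set ℕ := Set.range (fun n => (e (2 * n) : ℕ)) with hC₁
  set C₂ : Set ℕ := Set.range (fun n => (e (2 * n + 1) : ℕ)) with hC₂
  have hinj : ∀ a b : ℕ, (e a : ℕ) = (e b : ℕ) → a = b := by
    intro a b hab
    exact e.injective (Subtype.coe_injective hab)
  have hC₁S : C₁ ⊆ S := by rintro x ⟨n, rfl⟩; exact (e (2 * n)).2
  have hC₂S : C₂ ⊆ S := by rintro x ⟨n, rfl⟩; exact (e (2 * n + 1)).2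
  have hC₁inf : C₁.Infinite :=
    Set.infinite_range_of_injective (fun a b hab => by have := hinj _ _ hab; omega)
  have hC₂inf : C₂.Infinite :=
    Set.infinite_range_of_injective (fun a b hab => by have := hinj _ _ hab; omega)
  by_cases h : C₁ ∈ W
  · refine ⟨C₂, hC₂S, hC₂inf, ?_⟩
    intro h₂
    have hdisj : C₁ ∩ C₂ = ∅ := by
      ext x
      simp only [Set.mem_inter_iff, Set.mem_empty_iff_false, iff_false, not_and]
      rintro ⟨n, rfl⟩ ⟨m, hm⟩
      have := hinj _ _ hm
      omega
    have hWemp : (∅ : Set ℕ) ∈ W := by rw [← hdisj]; exact Filter.inter_mem h h₂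
    exact Filter.empty_notMem (W : Filter ℕ) hWemp
  · exact ⟨C₁, hC₁S, hC₁inf, h⟩

lemma fib_subset_basic {f : ℕ → ℕ} (hf : FinToOne f) {W₀ : Ultrafilter ℕ} {A : Set ℕ}
    (h : ∀ w : Ultrafilter ℕ, Nonprincipal w → w.map f = W₀.map f → A ∈ w) :
    ∃ S ∈ W₀.map f, (f ⁻¹' S ∩ Aᶜ).Finite := by
  by_contra hcon
  push_neg at hcon
  have hinf : ∀ S ∈ W₀.map f, (Aᶜ ∩ f ⁻¹' S).Infinite := by
    intro S hS
    have h1 : ¬(f ⁻¹' S ∩ Aᶜ).Finite := hcon S hS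
    rw [← Set.not_infinite] at h1
    have h2 := of_not_not h1
    exact h2.mono (fun z hz => ⟨hz.2, hz.1⟩)
  set gens : Set (Set ℕ) := {Aᶜ} ∪ {B | ∃ S ∈ W₀.map f, B = f ⁻¹' S} with hgens
  have key2 : ∀ t : Set (Set ℕ), t.Finite → t ⊆ gens →
      ∃ S ∈ W₀.map f, Aᶜ ∩ f ⁻¹' S ⊆ ⋂₀ t := by
    intro t htfin
    refine Set.Finite.induction_on (motive := fun t _ => t ⊆ gens →
      ∃ S ∈ W₀.map f, Aᶜ ∩ f ⁻¹' S ⊆ ⋂₀ t) t htfin ?_ ?_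
    · intro _
      exact ⟨Set.univ, Filter.univ_mem, by simp⟩
    · intro a s' ha hsf ih hsub
      obtain ⟨S, hS, hSsub⟩ := ih (fun B hB => hsub (Set.mem_insert_of_mem _ hB))
      rcases hsub (Set.mem_insert _ _) with haA | ⟨S', hS', haS'⟩
      · refine ⟨S, hS, ?_⟩
        rintro z ⟨hz1, hz2⟩
        rw [Set.sInter_insert]
        exact ⟨by rw [haA]; exact hz1, hSsub ⟨hz1, hz2⟩⟩
      · refine ⟨S' ∩ S, Filter.inter_mem hS' hS, ?_⟩
        rintro z ⟨hz1, hz2⟩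
        rw [Set.sInter_insert]
        exact ⟨by rw [haS']; exact hz2.1, hSsub ⟨hz1, hz2.2⟩⟩
  have hgeninf : ∀ s ∈ Filter.generate gens, s.Infinite := by
    intro s hs
    rw [Filter.mem_generate_iff] at hs
    obtain ⟨t, htsub, htfin, hts⟩ := hs
    obtain ⟨S, hS, hSsub⟩ := key2 t htfin htsub
    exact (hinf S hS).mono (le_trans hSsub hts)
  obtain ⟨V, hVnp, hVle⟩ := exists_np_ultra hgeninf
  have hAc : Aᶜ ∈ V := hVle (Filter.mem_generate_of_mem (Or.inl rfl))
  have hmapeq : V.map f = W₀.map f := by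
    apply ultra_eq_of_le
    intro S hS
    rw [Ultrafilter.mem_map]
    exact hVle (Filter.mem_generate_of_mem (Or.inr ⟨S, hS, rfl⟩))
  have hAV : A ∈ V := h V hVnp hmapeq
  exact (Ultrafilter.compl_mem_iff_notMem.1 hAc) hAV

lemma fib_closed_iInter {f : ℕ → ℕ} {W₀ : Ultrafilter ℕ} {u : Ultrafilter ℕ} :
    u.map f = W₀.map f ↔ ∀ A ∈ W₀.map f, f ⁻¹' A ∈ u := by
  constructor
  · intro h A hA
    rw [← h] at hA
    exact (Ultrafilter.mem_map).1 hA
  · intro h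
    apply ultra_eq_of_le
    intro S hS
    rw [Ultrafilter.mem_map]
    exact h S hS

lemma fib_isClosed {f : ℕ → ℕ} {W₀ : Ultrafilter ℕ} :
    IsClosed {u : OmegaStar | u.1.map f = W₀.map f} := by
  have h1 : {u : OmegaStar | u.1.map f = W₀.map f} =
      (fun u : OmegaStar => u.1) ⁻¹'
        (⋂ A ∈ {A : Set ℕ | A ∈ W₀.map f}, {w : Ultrafilter ℕ | f ⁻¹' A ∈ w}) := by
    ext u
    simp only [Set.mem_preimage, Set.mem_iInter, Set.mem_setOf_eq]
    exact fib_closed_iInter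
  rw [h1]
  exact (isClosed_biInter (fun A _ => ultrafilter_isClosed_basic _)).preimage val_continuous

lemma fib_nwd {f : ℕ → ℕ} (hf : FinToOne f) {W₀ : Ultrafilter ℕ} (hW₀np : Nonprincipal W₀) :
    IsNowhereDense {u : OmegaStar | u.1.map f = W₀.map f} := by
  show interior (closure _) = ∅
  rw [fib_isClosed.closure_eq]
  rw [Set.eq_empty_iff_forall_notMem]
  intro u hu
  obtain ⟨O, hO, hOeq⟩ := omegaStar_isOpen_iff.1 (isOpen_interior
    (s := {u : OmegaStar | u.1.map f = W₀.map f}))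
  have huO : u.1 ∈ O := by rw [← hOeq] at hu; exact hu
  obtain ⟨A, hAu, hAsub⟩ := basic_of_open hO huO
  have hAinf : A.Infinite := u.2.mem_infinite hAu
  obtain ⟨C, hCsub, hCinf, hCW⟩ :=
    exists_infinite_not_mem (finToOne_image_infinite hf hAinf) (W₀.map f)
  have hACinf : (A ∩ f ⁻¹' C).Infinite := by
    intro hfin
    apply hCinf
    apply (hfin.image f).subset
    intro n hn
    obtain ⟨a, haA, hfa⟩ := hCsub hn
    exact ⟨a, ⟨haA, by rw [Set.mem_preimage, hfa]; exact hn⟩, hfa⟩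
  obtain ⟨V, hVnp, hVle⟩ := exists_np_ultra (F := Filter.principal (A ∩ f ⁻¹' C))
    (fun s hs => hACinf.mono (Filter.mem_principal.1 hs))
  have hAV : A ∈ V := hVle (Filter.mem_principal.2 Set.inter_subset_left)
  have hCV : C ∈ V.map f := by
    rw [Ultrafilter.mem_map]
    exact hVle (Filter.mem_principal.2 Set.inter_subset_right)
  have hVO : (⟨V, hVnp⟩ : OmegaStar) ∈ interior {u : OmegaStar | u.1.map f = W₀.map f} := by
    rw [← hOeq]
    exact hAsub hAV
  have hVB : (⟨V, hVnp⟩ : OmegaStar) ∈ {u : OmegaStar | u.1.map f = W₀.map f} :=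
    interior_subset hVO
  rw [show Ultrafilter.map f V = Ultrafilter.map f W₀ from hVB] at hCV
  exact hCW hCV

lemma map_ppoint {f : ℕ → ℕ} (hf : FinToOne f) {W₀ : Ultrafilter ℕ} (hpp : IsPPoint W₀) :
    IsPPoint (W₀.map f) := by
  intro T hT hTdec
  obtain ⟨C, hC, hCd⟩ := hpp (fun k => f ⁻¹' T k)
    (fun k => (Ultrafilter.mem_map).1 (hT k))
    (fun k => Set.preimage_mono (hTdec k))
  refine ⟨f '' C, ?_, ?_⟩
  · rw [Ultrafilter.mem_map]
    exact Filter.mem_of_superset hC (Set.subset_preimage_image f C)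
  · intro k
    apply ((hCd k).image f).subset
    rintro n ⟨⟨x, hxC, rfl⟩, hnT⟩
    exact ⟨x, ⟨hxC, hnT⟩, rfl⟩

lemma fib_pset {f : ℕ → ℕ} (hf : FinToOne f) {W₀ : Ultrafilter ℕ} (hW₀np : Nonprincipal W₀)
    (hW₀pp : IsPPoint W₀) : IsPSet {u : OmegaStar | u.1.map f = W₀.map f} := by
  intro Un hUn
  classical
  set K : Set (Ultrafilter ℕ) := {w | w.map f = W₀.map f ∧ Nonprincipal w} with hK
  have hKclosed : IsClosed K := by
    have h1 : K = (⋂ A ∈ {A : Set ℕ | A ∈ W₀.map f}, {w : Ultrafilter ℕ | f ⁻¹' A ∈ w}) ∩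
        (⋂ n : ℕ, {w : Ultrafilter ℕ | {n} ∈ w}ᶜ) := by
      ext w
      simp only [hK, Set.mem_setOf_eq, Set.mem_inter_iff, Set.mem_iInter, Set.mem_compl_iff]
      constructor
      · rintro ⟨h1, h2⟩
        exact ⟨fun A hA => fib_closed_iInter.1 h1 A hA, np_iff_singleton.1 h2⟩
      · rintro ⟨h1, h2⟩
        exact ⟨fib_closed_iInter.2 h1, np_iff_singleton.2 h2⟩
    rw [h1]
    exact IsClosed.inter (isClosed_biInter (fun A _ => ultrafilter_isClosed_basic _))
      (isClosed_iInter (fun n => (ultrafilter_isOpen_basic _).isClosed_compl))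
  have hKcompact : IsCompact K := hKclosed.isCompact
  have hopen : ∀ n, ∃ O : Set (Ultrafilter ℕ), IsOpen O ∧
      (fun u : OmegaStar => u.1) ⁻¹' O = Un n := fun n => omegaStar_isOpen_iff.1 (hUn n).1
  choose O hOopen hOeq using hopen
  have hKO : ∀ n, K ⊆ O n := by
    intro n w hw
    have h1 : (⟨w, hw.2⟩ : OmegaStar) ∈ Un n := (hUn n).2 hw.1
    rw [← hOeq n] at h1
    exact h1
  have hbasic : ∀ n, ∃ A : Set ℕ, K ⊆ {w : Ultrafilter ℕ | A ∈ w} ∧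
      {w : Ultrafilter ℕ | A ∈ w} ⊆ O n := by
    intro n
    have hchoice : ∀ w : ↥K, ∃ A : Set ℕ, A ∈ (w : Ultrafilter ℕ) ∧
        {v : Ultrafilter ℕ | A ∈ v} ⊆ O n :=
      fun w => basic_of_open (hOopen n) (hKO n w.2)
    choose Aw hAwmem hAwsub using hchoice
    have hcover : K ⊆ ⋃ w : ↥K, {v : Ultrafilter ℕ | Aw w ∈ v} := by
      intro w hw
      exact Set.mem_iUnion.2 ⟨⟨w, hw⟩, hAwmem ⟨w, hw⟩⟩
    obtain ⟨t, ht⟩ := hKcompact.elim_finite_subcover _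
      (fun w : ↥K => ultrafilter_isOpen_basic (Aw w)) hcover
    refine ⟨⋃ w ∈ t, Aw w, ?_, ?_⟩
    · intro w hw
      obtain ⟨i, hit, hmem⟩ := Set.mem_iUnion₂.1 (ht hw)
      show (⋃ w ∈ t, Aw w) ∈ w
      exact Filter.mem_of_superset hmem (Set.subset_biUnion_of_mem hit)
    · intro w hw
      have hw' : (⋃ i ∈ (↑t : Set ↥K), Aw i) ∈ w := hw
      obtain ⟨i, hit, hmem⟩ := (Ultrafilter.finite_biUnion_mem_iff (t.finite_toSet)).1 hw'
      exact hAwsub i hmem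
  choose A hAK hAO using hbasic
  have hS : ∀ n, ∃ S ∈ W₀.map f, (f ⁻¹' S ∩ (A n)ᶜ).Finite := by
    intro n
    apply fib_subset_basic hf
    intro w hwnp hwmap
    exact hAK n ⟨hwmap, hwnp⟩
  choose S hSW hSfin using hS
  set T : ℕ → Set ℕ := fun k => ⋂ j ∈ Finset.range (k + 1), S j with hT
  have hTmem : ∀ k, T k ∈ W₀.map f := by
    intro k
    apply (Filter.biInter_finset_mem _).2
    intro j _
    exact hSW j
  have hTdec : ∀ k, T (k + 1) ⊆ T k := by
    intro k z hz
    simp only [hT, Set.mem_iInter] at hz ⊢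
    intro j hj
    exact hz j (by simp at hj ⊢; omega)
  obtain ⟨C, hCW, hCT⟩ := map_ppoint hf hW₀pp T hTmem hTdec
  refine ⟨(fun u : OmegaStar => u.1) ⁻¹' {w : Ultrafilter ℕ | f ⁻¹' C ∈ w}, ?_, ?_, ?_⟩
  · exact (ultrafilter_isOpen_basic _).preimage val_continuous
  · intro u hu
    show f ⁻¹' C ∈ u.1
    exact fib_closed_iInter.1 hu C hCW
  · intro u hu
    rw [Set.mem_iInter]
    intro n
    have hCu : f ⁻¹' C ∈ u.1 := hu
    have hfin : (f ⁻¹' C \ A n).Finite := by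
      have hTS : T n ⊆ S n := by
        intro z hz
        simp only [hT, Set.mem_iInter] at hz
        exact hz n (by simp)
      have hsplit : f ⁻¹' C \ A n ⊆ (f ⁻¹' (C \ T n)) ∪ (f ⁻¹' (S n) ∩ (A n)ᶜ) := by
        rintro z ⟨hz1, hz2⟩
        by_cases hTz : f z ∈ T n
        · exact Or.inr ⟨hTS hTz, hz2⟩
        · exact Or.inl ⟨hz1, hTz⟩
      exact ((finToOne_preimage_finite hf (hCT n)).union ((hSfin n))).subset hsplit
    have hAu : A n ∈ u.1 := by
      have h3 : (f ⁻¹' C \ A n)ᶜ ∈ u.1 := by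
        apply np_iff_cofinite.1 u.2
        rw [Filter.mem_cofinite, compl_compl]
        exact hfin
      apply Filter.mem_of_superset (Filter.inter_mem hCu h3)
      rintro z ⟨hz1, hz2⟩
      by_contra hzA
      exact hz2 ⟨hz1, hzA⟩
    rw [← hOeq n]
    exact hAO n hAu

end AuxiliaryLemmas

/-- NCF implies that `ω*` can be covered by nowhere dense P-sets. -/
theorem ncf_implies_cover_by_nwd_Psets
    (ncf : ∀ U V : Ultrafilter ℕ, Nonprincipal U → Nonprincipal V →
      ∃ f : ℕ → ℕ, (∀ n : ℕ, (f ⁻¹' {n}).Finite) ∧ U.map f = V.map f) :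
    ∃ 𝒞 : Set (Set OmegaStar), (∀ B ∈ 𝒞, IsNowhereDense B ∧ IsPSet B) ∧ ⋃₀ 𝒞 = univ := by
  obtain ⟨W₀, hW₀np, hW₀pp⟩ := exists_ppoint ncf
  refine ⟨{B | ∃ f : ℕ → ℕ, FinToOne f ∧ B = {u : OmegaStar | u.1.map f = W₀.map f}}, ?_, ?_⟩
  · rintro B ⟨f, hf, rfl⟩
    exact ⟨fib_nwd hf hW₀np, fib_pset hf hW₀np hW₀pp⟩
  · apply Set.eq_univ_of_forall
    intro u
    obtain ⟨f, hf, heq⟩ := ncf u.1 W₀ u.2 hW₀np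
    exact ⟨{v : OmegaStar | v.1.map f = W₀.map f}, ⟨f, hf, rfl⟩, heq⟩
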